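/- arXiv:1712.00404 — 4 statements merged into one kernel-verified Lean document; each statement's English description precedes it below -/
import Mathlib

section
/- Let U_F be an N×|F| complex matrix with orthonormal columns (U_Fᴴ U_F = I). For t = 0,…,T let C_t be an N×N diagonal matrix with {0,1} diagonal entries, let C = blkdiag(C_0,…,C_T) and C^c = I_{N(T+1)} − C. Let Ã be an ((T+1)|F|)×|F| complex matrix and suppose there are real numbers 0 < s_min ≤ s_max such that s_min‖z‖ ≤ ‖Ãz‖ ≤ s_max‖z‖ for all z ∈ ℂ^{|F|}. If the ℓ2 operator norm satisfies ‖C^c (I_{T+1} ⊗ U_F)‖ < s_min² / s_max², then the |F|×|F| matrix Ãᴴ (I_{T+1} ⊗ U_F)ᴴ C (I_{T+1} ⊗ U_F) Ã is positive definite, hence invertible; equivalently, the observability matrix O = C (I_{T+1} ⊗ U_F) Ã has full column rank |F| and the F-bandlimited system is observable over the chosen sampling set. -/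
open Matrix
open scoped Matrix.Norms.L2Operator Kronecker ComplexOrder

lemma myKronConjT {l m p q : Type*} (A : Matrix l m ℂ) (B : Matrix p q ℂ) :
    (A ⊗ₖ B)ᴴ = Aᴴ ⊗ₖ Bᴴ := by
  ext ⟨i, j⟩ ⟨k, l'⟩
  simp [conjTranspose_apply, mul_comm]

lemma myNormSqrt {k : Type*} [Fintype k] (v : k → ℂ) :
    ‖(EuclideanSpace.equiv k ℂ).symm v‖ = Real.sqrt ((star v ⬝ᵥ v).re) := by
  rw [EuclideanSpace.norm_eq]
  congr 1
  simp only [dotProduct, Complex.re_sum, Pi.star_apply]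
  refine Finset.sum_congr rfl fun i _ => ?_
  rw [Complex.star_def, ← Complex.normSq_eq_conj_mul_self]
  simp [Complex.normSq_eq_norm_sq, ← Complex.ofReal_pow]

lemma myNormMulVec {m n : Type*} [Fintype m] [Fintype n] [DecidableEq n]
    (M : Matrix m n ℂ) (hM : Mᴴ * M = 1) (w : n → ℂ) :
    ‖(EuclideanSpace.equiv m ℂ).symm (M *ᵥ w)‖ = ‖(EuclideanSpace.equiv n ℂ).symm w‖ := by
  have key : star (M *ᵥ w) ⬝ᵥ (M *ᵥ w) = star w ⬝ᵥ w := by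
    rw [star_mulVec, dotProduct_mulVec, vecMul_vecMul, hM, vecMul_one]
  rw [myNormSqrt, myNormSqrt, key]

/-- Sufficient condition for observability of an `F`-bandlimited graph process:
if `‖C^c (I_{T+1} ⊗ U_F)‖ < s_min²/s_max²`, where `C` is the block-diagonal `{0,1}`
graph-time sampling matrix, `C^c = I - C`, and `s_min`, `s_max` bound the singular values
of `Ã`, then the Gram matrix `Ãᴴ (I ⊗ U_F)ᴴ C (I ⊗ U_F) Ã` is positive definite and the
observability matrix `O = C (I ⊗ U_F) Ã` has full column rank `|F|`. -/
theorem observability_of_l2_opNorm_lt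
    {N F T : ℕ} (UF : Matrix (Fin N) (Fin F) ℂ) (hUF : UFᴴ * UF = 1)
    (c : Fin (T + 1) → Fin N → ℕ) (hc : ∀ t n, c t n = 0 ∨ c t n = 1)
    (C : Matrix (Fin (T + 1) × Fin N) (Fin (T + 1) × Fin N) ℂ)
    (hC : C = Matrix.diagonal (fun p => (c p.1 p.2 : ℂ)))
    (Atil : Matrix (Fin (T + 1) × Fin F) (Fin F) ℂ)
    (smin smax : ℝ) (hsmin : 0 < smin) (hsle : smin ≤ smax)
    (hsv : ∀ z : EuclideanSpace ℂ (Fin F),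
      smin * ‖z‖ ≤ ‖(EuclideanSpace.equiv (Fin (T + 1) × Fin F) ℂ).symm (Atil.mulVec z)‖ ∧
      ‖(EuclideanSpace.equiv (Fin (T + 1) × Fin F) ℂ).symm (Atil.mulVec z)‖ ≤ smax * ‖z‖)
    (hnorm : ‖(1 - C) * ((1 : Matrix (Fin (T + 1)) (Fin (T + 1)) ℂ) ⊗ₖ UF)‖
      < smin ^ 2 / smax ^ 2) :
    (Atilᴴ * ((1 : Matrix (Fin (T + 1)) (Fin (T + 1)) ℂ) ⊗ₖ UF)ᴴ * C *
        ((1 : Matrix (Fin (T + 1)) (Fin (T + 1)) ℂ) ⊗ₖ UF) * Atil).PosDef ∧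
      (C * ((1 : Matrix (Fin (T + 1)) (Fin (T + 1)) ℂ) ⊗ₖ UF) * Atil).rank = F := by
  set B := (1 : Matrix (Fin (T + 1)) (Fin (T + 1)) ℂ) ⊗ₖ UF with hBdef
  have hBB : Bᴴ * B = 1 := by
    rw [hBdef, myKronConjT, ← mul_kronecker_mul, conjTranspose_one, one_mul, hUF,
      one_kronecker_one]
  have hCherm : Cᴴ = C := by
    rw [hC, diagonal_conjTranspose]
    exact congrArg _ (funext fun p => by simp [Pi.star_apply])
  have hCidem : C * C = C := by
    rw [hC, diagonal_mul_diagonal]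
    exact congrArg _ (funext fun p => by rcases hc p.1 p.2 with h | h <;> simp [h])
  set O := C * B * Atil with hOdef
  -- injectivity of mulVec O
  have hinj : ∀ x : Fin F → ℂ, x ≠ 0 → O *ᵥ x ≠ 0 := by
    intro x hx h0
    set z : EuclideanSpace ℂ (Fin F) := (EuclideanSpace.equiv (Fin F) ℂ).symm x with hzdef
    have hz : 0 < ‖z‖ := by
      rw [norm_pos_iff]
      exact fun h => hx (congrArg (EuclideanSpace.equiv (Fin F) ℂ) h)
    obtain ⟨h1, h2⟩ := hsv z
    set w : (Fin (T + 1) × Fin F) → ℂ := Atil *ᵥ x with hwdef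
    set wE := (EuclideanSpace.equiv (Fin (T + 1) × Fin F) ℂ).symm w with hwE
    have hwz : smin * ‖z‖ ≤ ‖wE‖ := h1
    have hwz' : ‖wE‖ ≤ smax * ‖z‖ := h2
    have hwpos : 0 < ‖wE‖ := lt_of_lt_of_le (by positivity) hwz
    have hCv : C *ᵥ (B *ᵥ w) = 0 := by
      rw [mulVec_mulVec, hwdef, mulVec_mulVec]
      exact h0
    have hvv : ((1 - C) * B) *ᵥ w = B *ᵥ w := by
      rw [← mulVec_mulVec, sub_mulVec, one_mulVec, hCv, sub_zero]
    have hnv : ‖(EuclideanSpace.equiv (Fin (T + 1) × Fin N) ℂ).symm (B *ᵥ w)‖ = ‖wE‖ :=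
      myNormMulVec B hBB w
    have hle : ‖(EuclideanSpace.equiv (Fin (T + 1) × Fin N) ℂ).symm (((1 - C) * B) *ᵥ w)‖
        ≤ ‖(1 - C) * B‖ * ‖wE‖ := l2_opNorm_mulVec _ wE
    rw [hvv, hnv] at hle
    have hcontra : ‖wE‖ < smin * ‖z‖ := by
      calc ‖wE‖ ≤ ‖(1 - C) * B‖ * ‖wE‖ := hle
        _ < (smin ^ 2 / smax ^ 2) * ‖wE‖ := by
            exact mul_lt_mul_of_pos_right hnorm hwpos
        _ ≤ (smin ^ 2 / smax ^ 2) * (smax * ‖z‖) := by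
            apply mul_le_mul_of_nonneg_left hwz'
            positivity
        _ = (smin / smax) * (smin * ‖z‖) := by
            have hsmax0 : smax ≠ 0 := (lt_of_lt_of_le hsmin hsle).ne'
            field_simp
        _ ≤ 1 * (smin * ‖z‖) := by
            apply mul_le_mul_of_nonneg_right _ (by positivity)
            rw [div_le_one (lt_of_lt_of_le hsmin hsle)]
            exact hsle
        _ = smin * ‖z‖ := one_mul _
    exact absurd hwz (not_le.mpr hcontra)
  have hGram : Atilᴴ * Bᴴ * C * B * Atil = Oᴴ * O := by
    have hOH : Oᴴ = Atilᴴ * Bᴴ * C := by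
      rw [hOdef, conjTranspose_mul, conjTranspose_mul, hCherm, Matrix.mul_assoc]
    rw [hOH, hOdef]
    calc Atilᴴ * Bᴴ * C * B * Atil = Atilᴴ * Bᴴ * (C * C) * B * Atil := by rw [hCidem]
      _ = Atilᴴ * Bᴴ * C * (C * B * Atil) := by
          simp only [Matrix.mul_assoc]
  have hPD : (Oᴴ * O).PosDef := by
    refine PosDef.of_dotProduct_mulVec_pos (isHermitian_conjTranspose_mul_self O) fun x hx => ?_
    rw [← mulVec_mulVec, dotProduct_mulVec, ← star_mulVec]
    exact dotProduct_star_self_pos_iff.mpr (hinj x hx)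
  constructor
  · rw [hGram]; exact hPD
  · have : O.rank = (Oᴴ * O).rank := (rank_conjTranspose_mul_self O).symm
    rw [hOdef] at this
    rw [this, rank_of_isUnit _ hPD.isUnit, Fintype.card_fin]
end

section
/- Let ι be a finite index set, let w : ι → ℝ be weights with w_i ≥ 0 and Σ_i w_i = 1, and let X_i be n×n complex Hermitian positive definite matrices for every i with w_i > 0 (and positive semidefinite otherwise). Then the convex combination Σ_i w_i X_i is positive definite and Re tr[(Σ_i w_i X_i)⁻¹] ≤ Σ_i w_i · Re tr[X_i⁻¹]; i.e., the map X ↦ tr(X⁻¹) is convex on Hermitian positive definite matrices. -/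
open Matrix
open scoped ComplexOrder


lemma aux_smul_psd {n : ℕ} {c : ℝ} (hc : 0 ≤ c) {A : Matrix (Fin n) (Fin n) ℂ}
    (hA : A.PosSemidef) : ((c : ℂ) • A).PosSemidef := by
  rw [posSemidef_iff_dotProduct_mulVec]
  constructor
  · unfold Matrix.IsHermitian
    rw [conjTranspose_smul, hA.1.eq]
    congr 1
    simp
  · intro x
    have h := hA.dotProduct_mulVec_nonneg x
    rw [Matrix.smul_mulVec, dotProduct_smul]
    exact smul_nonneg (by exact_mod_cast hc) h

lemma aux_smul_pd {n : ℕ} {c : ℝ} (hc : 0 < c) {A : Matrix (Fin n) (Fin n) ℂ}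
    (hA : A.PosDef) : ((c : ℂ) • A).PosDef := by
  rw [posDef_iff_dotProduct_mulVec]
  refine ⟨(aux_smul_psd hc.le hA.posSemidef).1, fun x hx => ?_⟩
  have h := hA.dotProduct_mulVec_pos hx
  rw [Matrix.smul_mulVec, dotProduct_smul]
  exact smul_pos (by exact_mod_cast hc) h

lemma aux_trace_re_nonneg {n : ℕ} {A : Matrix (Fin n) (Fin n) ℂ}
    (hA : A.PosSemidef) : 0 ≤ A.trace.re := by
  have h : ∀ i, 0 ≤ (A i i).re := by
    intro i
    have := hA.re_dotProduct_nonneg (Pi.single i 1)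
    simpa [dotProduct, mulVec, Pi.single_apply, Finset.sum_ite_eq'] using this
  rw [Matrix.trace, Complex.re_sum]
  exact Finset.sum_nonneg fun i _ => h i


/-- Convexity of `X ↦ tr(X⁻¹)` on Hermitian positive definite matrices: if `w` are convex
combination weights and each `X i` is positive semidefinite, positive definite whenever
`w i > 0`, then `Σ_i w_i X_i` is positive definite and
`Re tr[(Σ_i w_i X_i)⁻¹] ≤ Σ_i w_i · Re tr[X_i⁻¹]`. -/
theorem trace_inv_convex_combination_le
    {ι : Type} [Fintype ι] {n : ℕ}
    (w : ι → ℝ) (hw : ∀ i, 0 ≤ w i) (hw1 : ∑ i, w i = 1)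
    (X : ι → Matrix (Fin n) (Fin n) ℂ)
    (hXsd : ∀ i, (X i).PosSemidef)
    (hXd : ∀ i, 0 < w i → (X i).PosDef) :
    (∑ i, (w i : ℂ) • X i).PosDef ∧
      ((∑ i, (w i : ℂ) • X i)⁻¹.trace).re ≤ ∑ i, w i * ((X i)⁻¹.trace).re := by
  classical
  set S : Matrix (Fin n) (Fin n) ℂ := ∑ i, (w i : ℂ) • X i with hSdef
  -- some weight is positive
  obtain ⟨j, hj⟩ : ∃ j, 0 < w j := by
    by_contra h
    push_neg at h
    have : ∑ i, w i = 0 := Finset.sum_eq_zero fun i _ => le_antisymm (h i) (hw i)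
    rw [this] at hw1; norm_num at hw1
  -- positive definiteness of S
  have hpsd_sum : ∀ (s : Finset ι), (∑ i ∈ s, (w i : ℂ) • X i).PosSemidef := by
    intro s
    refine Finset.sum_induction _ _ (fun a b ha hb => ha.add hb) Matrix.PosSemidef.zero ?_
    exact fun i _ => aux_smul_psd (hw i) (hXsd i)
  have hS : S.PosDef := by
    rw [hSdef, ← Finset.add_sum_erase _ _ (Finset.mem_univ j)]
    exact (aux_smul_pd hj (hXd j hj)).add_posSemidef (hpsd_sum _)
  refine ⟨hS, ?_⟩
  set Y : Matrix (Fin n) (Fin n) ℂ := S⁻¹ with hYdef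
  have hSdet : IsUnit S.det := (Matrix.isUnit_iff_isUnit_det S).mp hS.isUnit
  have hYS : Y * S = 1 := Matrix.nonsing_inv_mul S hSdet
  have hY : Y.PosSemidef := hS.inv.posSemidef
  -- key complex identity
  have h3 : ∑ i, (w i : ℂ) * (Y * X i * Y).trace = Y.trace := by
    have hYSY : Y * S * Y = ∑ i, (w i : ℂ) • (Y * X i * Y) := by
      rw [hSdef, Matrix.mul_sum, Matrix.sum_mul]
      exact Finset.sum_congr rfl fun i _ => by
        rw [Matrix.mul_smul, Matrix.smul_mul]
    have : (Y * S * Y).trace = ∑ i, (w i : ℂ) * (Y * X i * Y).trace := by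
      rw [hYSY, trace_sum]
      exact Finset.sum_congr rfl fun i _ => by rw [trace_smul, smul_eq_mul]
    rw [← this, hYS, Matrix.one_mul]
  have h1 : ∑ i, ((w i : ℂ)) = 1 := by
    rw [← Complex.ofReal_sum, hw1, Complex.ofReal_one]
  have hid : ∑ i, (w i : ℂ) * (Y.trace + Y.trace - (Y * X i * Y).trace) = Y.trace := by
    have : ∑ i, (w i : ℂ) * (Y.trace + Y.trace - (Y * X i * Y).trace)
        = (∑ i, (w i : ℂ)) * (Y.trace + Y.trace)
          - ∑ i, (w i : ℂ) * (Y * X i * Y).trace := by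
      rw [Finset.sum_mul, ← Finset.sum_sub_distrib]
      exact Finset.sum_congr rfl fun i _ => by ring
    rw [this, h1, h3]; ring
  -- rewrite LHS
  have hLHS : ((S⁻¹).trace).re
      = ∑ i, w i * ((Y.trace).re + (Y.trace).re - ((Y * X i * Y).trace).re) := by
    calc ((S⁻¹).trace).re
        = (∑ i, (w i : ℂ) * (Y.trace + Y.trace - (Y * X i * Y).trace)).re := by rw [hid]
      _ = ∑ i, w i * ((Y.trace).re + (Y.trace).re - ((Y * X i * Y).trace).re) := by
          rw [Complex.re_sum]
          exact Finset.sum_congr rfl fun i _ => by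
            rw [Complex.re_ofReal_mul, Complex.sub_re, Complex.add_re]
  rw [hLHS]
  refine Finset.sum_le_sum fun i _ => ?_
  rcases (hw i).eq_or_lt with h0 | hwi
  · rw [← h0, zero_mul, zero_mul]
  · refine mul_le_mul_of_nonneg_left ?_ (hw i)
    have hXi : (X i).PosDef := hXd i hwi
    have hdet : IsUnit (X i).det := (Matrix.isUnit_iff_isUnit_det _).mp hXi.isUnit
    have hinv1 : Y * X i * (X i)⁻¹ = Y := by
      rw [Matrix.mul_assoc, Matrix.mul_nonsing_inv _ hdet, Matrix.mul_one]
    have hinv2 : (X i)⁻¹ * X i = 1 := Matrix.nonsing_inv_mul _ hdet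
    set M : Matrix (Fin n) (Fin n) ℂ := Y - (X i)⁻¹ with hMdef
    have hMH : M.IsHermitian := hY.1.sub hXi.inv.isHermitian
    have hMpsd : (M * X i * M).PosSemidef := by
      have := (hXsd i).conjTranspose_mul_mul_same M
      rwa [hMH.eq] at this
    have hexp : M * X i * M = Y * X i * Y - Y - Y + (X i)⁻¹ := by
      rw [hMdef]
      simp only [Matrix.sub_mul, Matrix.mul_sub, hinv1, hinv2, Matrix.one_mul]
      abel
    have h0' : 0 ≤ (M * X i * M).trace.re := aux_trace_re_nonneg hMpsd
    have htr : (M * X i * M).trace.re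
        = ((Y * X i * Y).trace).re - (Y.trace).re - (Y.trace).re + (((X i)⁻¹).trace).re := by
      rw [hexp, trace_add, trace_sub, trace_sub, Complex.add_re, Complex.sub_re,
        Complex.sub_re]
    linarith [htr ▸ h0']
end

section
/- Let Ψ be an M×F complex matrix, let ι be a finite set indexing the possible realizations of a random sampling matrix, let w : ι → ℝ with w_i ≥ 0 and Σ_i w_i = 1 be their probabilities, and let each C_i be an M×M diagonal matrix with {0,1} diagonal entries such that Ψᴴ C_i Ψ is positive definite for every i with w_i > 0. Let C̄ = Σ_i w_i C_i be the expected sampling matrix. Then for any σ² > 0 the expected least-squares mean squared error is lower bounded as σ² Σ_i w_i Re tr[(Ψᴴ C_i Ψ)⁻¹] ≥ σ² Re tr[(Ψᴴ C̄ Ψ)⁻¹]. -/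
open Matrix
open scoped ComplexOrder

/-- Conjugate-symmetry of the sesquilinear form attached to a Hermitian matrix. -/
lemma herm_dot_symm {n : ℕ} {A : Matrix (Fin n) (Fin n) ℂ} (hA : A.IsHermitian)
    (u y : Fin n → ℂ) :
    star u ⬝ᵥ (A *ᵥ y) = star (star y ⬝ᵥ (A *ᵥ u)) := by
  rw [star_dotProduct, star_mulVec, hA.eq, ← dotProduct_mulVec]

/-- Variational bound: for a positive definite `A`,
`2 Re(x* y) - Re(y* A y) ≤ Re(x* A⁻¹ x)` for all `x, y`. -/
lemma key_var_bound {n : ℕ} {A : Matrix (Fin n) (Fin n) ℂ} (hA : A.PosDef)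
    (x y : Fin n → ℂ) :
    2 * (star x ⬝ᵥ y).re - (star y ⬝ᵥ (A *ᵥ y)).re ≤ (star x ⬝ᵥ (A⁻¹ *ᵥ x)).re := by
  have hdet : IsUnit A.det := hA.det_pos.ne'.isUnit
  set u : Fin n → ℂ := A⁻¹ *ᵥ x with hu
  have hAu : A *ᵥ u = x := by
    rw [hu, mulVec_mulVec, mul_nonsing_inv _ hdet, one_mulVec]
  have h0 : 0 ≤ (star (y - u) ⬝ᵥ (A *ᵥ (y - u))).re :=
    hA.posSemidef.re_dotProduct_nonneg _
  have hexp : star (y - u) ⬝ᵥ (A *ᵥ (y - u)) =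
      star y ⬝ᵥ (A *ᵥ y) - star y ⬝ᵥ x - star u ⬝ᵥ (A *ᵥ y) + star u ⬝ᵥ x := by
    rw [star_sub, mulVec_sub, sub_dotProduct, dotProduct_sub, dotProduct_sub, hAu]
    ring
  have h1 : star u ⬝ᵥ (A *ᵥ y) = star (star y ⬝ᵥ (A *ᵥ u)) := herm_dot_symm hA.isHermitian u y
  have h2 : star y ⬝ᵥ x = star (star x ⬝ᵥ y) := star_dotProduct _ _
  have h3 : star u ⬝ᵥ x = star (star x ⬝ᵥ u) := star_dotProduct _ _
  have hre : (star (y - u) ⬝ᵥ (A *ᵥ (y - u))).re =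
      (star y ⬝ᵥ (A *ᵥ y)).re - (star x ⬝ᵥ y).re - (star x ⬝ᵥ y).re + (star x ⬝ᵥ u).re := by
    rw [hexp, h1, hAu, h2, h3]
    simp [Complex.sub_re, Complex.add_re]
  rw [hre] at h0
  linarith

/-- Diagonal entries as quadratic forms against standard basis vectors. -/
lemma diag_entry_eq {n : ℕ} (B : Matrix (Fin n) (Fin n) ℂ) (j : Fin n) :
    star (Pi.single j 1) ⬝ᵥ (B *ᵥ Pi.single j 1) = B j j := by
  simp [dotProduct, mulVec, Pi.single_apply, Finset.sum_ite_eq, mul_comm]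

/-- Lower bound on the expected least-squares MSE under random sampling: if the random
sampling matrix takes the `{0,1}` diagonal values `C i` with probabilities `w i`, and
`Ψᴴ C_i Ψ` is positive definite for every realization with positive probability, then the
expected MSE `σ² Σ_i w_i Re tr[(Ψᴴ C_i Ψ)⁻¹]` is lower bounded by
`σ² Re tr[(Ψᴴ C̄ Ψ)⁻¹]`, where `C̄ = Σ_i w_i C_i` is the expected sampling matrix. -/
theorem expected_mse_lower_bound_random_sampling
    {M F : ℕ} {ι : Type} [Fintype ι]
    (Ψ : Matrix (Fin M) (Fin F) ℂ)
    (w : ι → ℝ) (hw : ∀ i, 0 ≤ w i) (hw1 : ∑ i, w i = 1)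
    (c : ι → Fin M → ℕ) (hc : ∀ i m, c i m = 0 ∨ c i m = 1)
    (C : ι → Matrix (Fin M) (Fin M) ℂ)
    (hC : ∀ i, C i = Matrix.diagonal (fun m => (c i m : ℂ)))
    (hpd : ∀ i, 0 < w i → (Ψᴴ * C i * Ψ).PosDef)
    (Cbar : Matrix (Fin M) (Fin M) ℂ) (hCbar : Cbar = ∑ i, (w i : ℂ) • C i)
    (σ2 : ℝ) (hσ2 : 0 < σ2) :
    σ2 * ((Ψᴴ * Cbar * Ψ)⁻¹.trace).re ≤
      σ2 * ∑ i, w i * ((Ψᴴ * C i * Ψ)⁻¹.trace).re := by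
  set A : ι → Matrix (Fin F) (Fin F) ℂ := fun i => Ψᴴ * C i * Ψ with hA
  set S : Matrix (Fin F) (Fin F) ℂ := Ψᴴ * Cbar * Ψ with hSdef
  -- decomposition of S
  have hS_decomp : S = ∑ i, (w i : ℂ) • A i := by
    rw [hSdef, hCbar, Matrix.mul_sum, Matrix.sum_mul]
    congr 1; ext i
    rw [Matrix.mul_smul, Matrix.smul_mul]
  -- each A i is Hermitian
  have hHermA : ∀ i, (A i).IsHermitian := by
    intro i
    show (Ψᴴ * C i * Ψ).IsHermitian
    rw [hC i]
    exact isHermitian_conjTranspose_mul_mul Ψ (isHermitian_diagonal_of_self_adjoint _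
      (funext fun m => by simp [Pi.star_apply]))
  -- quadratic form of S splits as weighted sum
  have hquad : ∀ v : Fin F → ℂ,
      star v ⬝ᵥ (S *ᵥ v) = ∑ i, (w i : ℂ) * (star v ⬝ᵥ (A i *ᵥ v)) := by
    intro v
    rw [hS_decomp]
    simp only [dotProduct, mulVec, Matrix.sum_apply, Pi.smul_apply, smul_eq_mul,
      Finset.sum_mul, Finset.mul_sum]
    refine Eq.trans (Finset.sum_congr rfl fun k _ => Finset.sum_comm) ?_
    refine Eq.trans Finset.sum_comm ?_
    refine Finset.sum_congr rfl fun i _ => Finset.sum_congr rfl fun k _ =>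
      Finset.sum_congr rfl fun l _ => by simp [Matrix.smul_apply]; ring
  -- S is positive definite
  have hne : ∃ i, 0 < w i := by
    by_contra h
    push_neg at h
    have : ∀ i ∈ Finset.univ, w i = 0 := fun i _ => le_antisymm (h i) (hw i)
    rw [Finset.sum_eq_zero this] at hw1
    norm_num at hw1
  obtain ⟨i0, hi0⟩ := hne
  have hSpd : S.PosDef := by
    rw [posDef_iff_dotProduct_mulVec]
    constructor
    · rw [hS_decomp]
      rw [IsHermitian]
      rw [conjTranspose_sum]
      exact Finset.sum_congr rfl fun i _ => by
        rw [conjTranspose_smul, (hHermA i).eq]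
        simp
    · intro x hx
      rw [hquad x]
      have hterm : ∀ i ∈ Finset.univ, 0 ≤ (w i : ℂ) * (star x ⬝ᵥ (A i *ᵥ x)) := by
        intro i _
        rcases lt_or_eq_of_le (hw i) with hwi | hwi
        · exact mul_nonneg (by exact_mod_cast Complex.zero_le_real.mpr (hw i))
            ((hpd i hwi).posSemidef.dotProduct_mulVec_nonneg x)
        · rw [← hwi]; simp
      refine Finset.sum_pos' hterm ⟨i0, Finset.mem_univ i0, ?_⟩
      exact mul_pos (by exact_mod_cast Complex.zero_lt_real.mpr hi0) ((hpd i0 hi0).dotProduct_mulVec_pos hx)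
  have hSdet : IsUnit S.det := hSpd.det_pos.ne'.isUnit
  -- per-diagonal-entry inequality
  have hdiag : ∀ j : Fin F, (S⁻¹ j j).re ≤ ∑ i, w i * ((A i)⁻¹ j j).re := by
    intro j
    set x : Fin F → ℂ := Pi.single j 1 with hxdef
    set y : Fin F → ℂ := S⁻¹ *ᵥ x with hydef
    have hSy : S *ᵥ y = x := by
      rw [hydef, mulVec_mulVec, mul_nonsing_inv _ hSdet, one_mulVec]
    have hb : (S⁻¹ j j).re = (star x ⬝ᵥ y).re := by
      rw [← diag_entry_eq S⁻¹ j, ← hxdef, ← hydef]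
    have hySy : (star y ⬝ᵥ (S *ᵥ y)).re = (star x ⬝ᵥ y).re := by
      rw [hSy]
      rw [star_dotProduct]
      simp
    have hsplit : (S⁻¹ j j).re =
        ∑ i, w i * (2 * (star x ⬝ᵥ y).re - (star y ⬝ᵥ (A i *ᵥ y)).re) := by
      have h1 : ∑ i, w i * (2 * (star x ⬝ᵥ y).re - (star y ⬝ᵥ (A i *ᵥ y)).re)
          = (∑ i, w i) * (2 * (star x ⬝ᵥ y).re) - ∑ i, w i * (star y ⬝ᵥ (A i *ᵥ y)).re := by
        rw [Finset.sum_mul]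
        rw [← Finset.sum_sub_distrib]
        exact Finset.sum_congr rfl fun i _ => by ring
      have h2 : (star y ⬝ᵥ (S *ᵥ y)).re = ∑ i, w i * (star y ⬝ᵥ (A i *ᵥ y)).re := by
        rw [hquad y, Complex.re_sum]
        exact Finset.sum_congr rfl fun i _ => Complex.re_ofReal_mul _ _
      rw [h1, hw1, ← h2, hySy, hb]
      ring
    rw [hsplit]
    refine Finset.sum_le_sum fun i _ => ?_
    rcases lt_or_eq_of_le (hw i) with hwi | hwi
    · refine mul_le_mul_of_nonneg_left ?_ (hw i)
      have hthis := key_var_bound (hpd i hwi) x y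
      have h4 : ((A i)⁻¹ j j) = star x ⬝ᵥ ((A i)⁻¹ *ᵥ x) := by
        rw [hxdef]; exact (diag_entry_eq _ j).symm
      rw [h4]
      exact hthis
    · rw [← hwi]; simp
  -- assemble the trace inequality
  have htr : ((S)⁻¹.trace).re ≤ ∑ i, w i * (((A i)⁻¹).trace).re := by
    have hL : ((S)⁻¹.trace).re = ∑ j, (S⁻¹ j j).re := by
      rw [Matrix.trace, Complex.re_sum]; rfl
    have hR : ∀ i, (((A i)⁻¹).trace).re = ∑ j, ((A i)⁻¹ j j).re := by
      intro i; rw [Matrix.trace, Complex.re_sum]; rfl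
    rw [hL]
    calc ∑ j, (S⁻¹ j j).re ≤ ∑ j, ∑ i, w i * ((A i)⁻¹ j j).re :=
          Finset.sum_le_sum fun j _ => hdiag j
      _ = ∑ i, w i * (((A i)⁻¹).trace).re := by
          rw [Finset.sum_comm]
          exact Finset.sum_congr rfl fun i _ => by rw [hR i, Finset.mul_sum]
  exact mul_le_mul_of_nonneg_left htr hσ2.le
end

section
/- Let U_F be an N×|F| complex matrix with orthonormal columns (U_Fᴴ U_F = I), let C_S be an N×N diagonal matrix with {0,1} diagonal entries, and let C_{S^c} = I − C_S. If the ℓ2 operator norm satisfies ‖C_{S^c} U_F‖ < 1, then the matrix U_Fᴴ C_S U_F is positive definite (hence invertible); consequently every F-bandlimited signal x = U_F x̃ is uniquely determined by its samples C_S x, i.e., C_S U_F x̃ = 0 implies x̃ = 0. -/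
open Matrix
open scoped Matrix.Norms.L2Operator ComplexOrder

lemma star_dotProduct_self_eq {k : ℕ} (v : Fin k → ℂ) :
    star v ⬝ᵥ v = Complex.ofReal (‖(EuclideanSpace.equiv (Fin k) ℂ).symm v‖ ^ 2) := by
  have hnorm : (‖(EuclideanSpace.equiv (Fin k) ℂ).symm v‖ : ℝ) ^ 2
      = ∑ i, Complex.normSq (v i) := by
    rw [EuclideanSpace.norm_eq, Real.sq_sqrt (by positivity)]
    refine Finset.sum_congr rfl fun i _ => ?_
    simp [Complex.sq_norm]
  rw [hnorm, Complex.ofReal_sum]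
  unfold dotProduct
  refine Finset.sum_congr rfl fun i _ => ?_
  simp [Pi.star_apply, Complex.normSq_eq_conj_mul_self]

/-- Reconstruction of bandlimited graph signals: if `U_F` has orthonormal columns, `C_S` is
the `{0,1}` diagonal projection onto the sampling set and `C_{S^c} = I − C_S`, then
`‖C_{S^c} U_F‖ < 1` implies that `U_Fᴴ C_S U_F` is positive definite (hence invertible) and
every `F`-bandlimited signal `x = U_F x̃` is uniquely determined by its samples `C_S x`:
`C_S U_F x̃ = 0` implies `x̃ = 0`. -/
theorem bandlimited_recovery_of_l2_opNorm_lt_one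
    {N F : ℕ} (UF : Matrix (Fin N) (Fin F) ℂ) (hUF : UFᴴ * UF = 1)
    (c : Fin N → ℕ) (hc : ∀ n, c n = 0 ∨ c n = 1)
    (CS : Matrix (Fin N) (Fin N) ℂ) (hCS : CS = Matrix.diagonal (fun n => (c n : ℂ)))
    (hnorm : ‖(1 - CS) * UF‖ < 1) :
    (UFᴴ * CS * UF).PosDef ∧
      ∀ xt : Fin F → ℂ, (CS * UF).mulVec xt = 0 → xt = 0 := by
  set Q : Matrix (Fin N) (Fin N) ℂ := 1 - CS with hQ
  have hCSH : CSᴴ = CS := by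
    have hstar : star (fun n : Fin N => ((c n : ℂ))) = fun n => (c n : ℂ) := by
      funext n
      simp
    rw [hCS, Matrix.diagonal_conjTranspose, hstar]
  have hQH : Qᴴ = Q := by
    rw [hQ, Matrix.conjTranspose_sub, hCSH, Matrix.conjTranspose_one]
  have hCSidem : CS * CS = CS := by
    have hfun : (fun n => (c n : ℂ) * (c n : ℂ)) = fun n => (c n : ℂ) := by
      funext n
      rcases hc n with h | h <;> simp [h]
    rw [hCS, Matrix.diagonal_mul_diagonal, hfun]
  have hQidem : Q * Q = Q := by
    rw [hQ]
    simp only [sub_mul, mul_sub, one_mul, mul_one, hCSidem]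
    abel
  have hkey : UFᴴ * CS * UF = 1 - (Q * UF)ᴴ * (Q * UF) := by
    have h1 : (Q * UF)ᴴ * (Q * UF) = UFᴴ * Q * UF := by
      simp only [Matrix.conjTranspose_mul, hQH, Matrix.mul_assoc]
      rw [← Matrix.mul_assoc Q Q UF, hQidem]
    rw [h1, hQ]
    simp only [Matrix.mul_sub, Matrix.sub_mul, Matrix.mul_one, Matrix.one_mul, hUF]
    abel
  have hposdef : (UFᴴ * CS * UF).PosDef := by
    rw [Matrix.posDef_iff_dotProduct_mulVec]
    constructor
    · show (UFᴴ * CS * UF)ᴴ = UFᴴ * CS * UF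
      simp [Matrix.conjTranspose_mul, hCSH, Matrix.mul_assoc]
    · intro x hx
      have hform : star x ⬝ᵥ (UFᴴ * CS * UF) *ᵥ x
          = star x ⬝ᵥ x - star ((Q * UF) *ᵥ x) ⬝ᵥ ((Q * UF) *ᵥ x) := by
        rw [hkey, Matrix.sub_mulVec, dotProduct_sub, Matrix.one_mulVec,
          Matrix.star_mulVec, Matrix.dotProduct_mulVec, Matrix.dotProduct_mulVec,
          Matrix.vecMul_vecMul]
      set y := (Q * UF) *ᵥ x with hy
      have hxE : (EuclideanSpace.equiv (Fin F) ℂ).symm x ≠ 0 := by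
        simpa using hx
      have hxpos : (0:ℝ) < ‖(EuclideanSpace.equiv (Fin F) ℂ).symm x‖ := norm_pos_iff.2 hxE
      have hle : ‖(EuclideanSpace.equiv (Fin N) ℂ).symm y‖
          ≤ ‖Q * UF‖ * ‖(EuclideanSpace.equiv (Fin F) ℂ).symm x‖ := by
        simpa using Matrix.l2_opNorm_mulVec (Q * UF) ((EuclideanSpace.equiv (Fin F) ℂ).symm x)
      have hlt : ‖(EuclideanSpace.equiv (Fin N) ℂ).symm y‖
          < ‖(EuclideanSpace.equiv (Fin F) ℂ).symm x‖ := by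
        calc ‖(EuclideanSpace.equiv (Fin N) ℂ).symm y‖
            ≤ ‖Q * UF‖ * ‖(EuclideanSpace.equiv (Fin F) ℂ).symm x‖ := hle
          _ < 1 * ‖(EuclideanSpace.equiv (Fin F) ℂ).symm x‖ :=
              mul_lt_mul_of_pos_right hnorm hxpos
          _ = _ := one_mul _
      have hsq : ‖(EuclideanSpace.equiv (Fin N) ℂ).symm y‖ ^ 2
          < ‖(EuclideanSpace.equiv (Fin F) ℂ).symm x‖ ^ 2 :=
        pow_lt_pow_left₀ hlt (norm_nonneg _) (by norm_num)
      rw [hform, star_dotProduct_self_eq x, star_dotProduct_self_eq y,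
        ← Complex.ofReal_sub]
      exact Complex.zero_lt_real.2 (by linarith)
  refine ⟨hposdef, fun xt h => ?_⟩
  by_contra hne
  have h0 : (UFᴴ * CS * UF) *ᵥ xt = 0 := by
    rw [Matrix.mul_assoc, ← Matrix.mulVec_mulVec, h, Matrix.mulVec_zero]
  have := hposdef.dotProduct_mulVec_pos hne
  rw [h0, dotProduct_zero] at this
  exact lt_irrefl 0 this
end
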